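/- Let d, f_1, …, f_n ∈ ℝ[v_1, …, v_N] with d irreducible, and suppose d divides f_1² + ⋯ + f_n² in ℝ[v_1, …, v_N]. If the real zero set of d is Zariski dense in the complex zero set of d, then d divides each f_i. -/

import Mathlib

open MvPolynomial

lemma real_dvd_of_complex_dvd {σ : Type*} (d g : MvPolynomial σ ℝ)
    (h : MvPolynomial.map (algebraMap ℝ ℂ) d ∣ MvPolynomial.map (algebraMap ℝ ℂ) g) :
    d ∣ g := by
  classical
  obtain ⟨q, hq⟩ := h
  refine ⟨∑ m ∈ q.support, monomial m (q.coeff m).re, ?_⟩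
  ext m
  have hq1 : ∀ b, MvPolynomial.coeff b (∑ m ∈ q.support, monomial m (q.coeff m).re)
      = (q.coeff b).re := by
    intro b
    rw [MvPolynomial.coeff_sum]
    simp only [coeff_monomial]
    rw [Finset.sum_ite_eq' q.support b fun m => (q.coeff m).re]
    split_ifs with hb
    · rfl
    · simp [MvPolynomial.notMem_support_iff.mp hb]
  have hcoe : ∀ r : ℝ, algebraMap ℝ ℂ r = (r : ℂ) := fun r => rfl
  have h1 : g.coeff m = ((MvPolynomial.map (algebraMap ℝ ℂ) g).coeff m).re := by
    rw [MvPolynomial.coeff_map]; simp [hcoe]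
  rw [h1, hq, MvPolynomial.coeff_mul, Complex.re_sum, MvPolynomial.coeff_mul]
  refine Finset.sum_congr rfl fun p _ => ?_
  rw [hq1, MvPolynomial.coeff_map, hcoe]
  simp [Complex.mul_re]

theorem irreducible_divides_sum_of_squares (N n : ℕ)
    (d : MvPolynomial (Fin N) ℝ) (f : Fin n → MvPolynomial (Fin N) ℝ)
    (hd : Irreducible d)
    (hdvd : d ∣ ∑ i, (f i) ^ 2)
    (hdense : ∀ g : MvPolynomial (Fin N) ℝ,
      (∀ x : Fin N → ℝ, MvPolynomial.eval x d = 0 → MvPolynomial.eval x g = 0) →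
      ∀ z : Fin N → ℂ,
        MvPolynomial.eval z (MvPolynomial.map (algebraMap ℝ ℂ) d) = 0 →
        MvPolynomial.eval z (MvPolynomial.map (algebraMap ℝ ℂ) g) = 0) :
    ∀ i, d ∣ f i := by
  intro i
  -- real vanishing
  have hreal : ∀ x : Fin N → ℝ, MvPolynomial.eval x d = 0 → MvPolynomial.eval x (f i) = 0 := by
    intro x hx
    obtain ⟨c, hc⟩ := hdvd
    have hsum : ∑ j, (MvPolynomial.eval x (f j)) ^ 2 = 0 := by
      have := congrArg (MvPolynomial.eval x) hc
      simpa [hx] using this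
    have h0 : ∀ j ∈ Finset.univ, (MvPolynomial.eval x (f j)) ^ 2 = 0 := by
      rw [← Finset.sum_eq_zero_iff_of_nonneg (fun j _ => sq_nonneg _)]
      exact hsum
    exact pow_eq_zero_iff (n := 2) (by norm_num) |>.mp (h0 i (Finset.mem_univ i))
  have hcomplex := hdense (f i) hreal
  -- Nullstellensatz
  set dC := MvPolynomial.map (algebraMap ℝ ℂ) d with hdC
  set fC := MvPolynomial.map (algebraMap ℝ ℂ) (f i) with hfC
  have hmem : fC ∈ MvPolynomial.vanishingIdeal ℂ (MvPolynomial.zeroLocus ℂ (Ideal.span {dC})) := by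
    rw [MvPolynomial.mem_vanishingIdeal_iff]
    intro z hz
    exact hcomplex z (hz dC (Ideal.subset_span rfl))
  rw [MvPolynomial.vanishingIdeal_zeroLocus_eq_radical] at hmem
  obtain ⟨k, hk⟩ := hmem
  rw [Ideal.mem_span_singleton] at hk
  have hdvdk : d ∣ (f i) ^ k := by
    apply real_dvd_of_complex_dvd
    rw [map_pow]
    exact hk
  exact (hd.prime).dvd_of_dvd_pow hdvdk
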